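/- If T ∈ B(H) is sub-n-normal, i.e., there exists a Hilbert space K ⊇ H and an operator S ∈ B(K) with Sⁿ normal, SH ⊆ H, and S|_H = T, then Tⁿ is hyponormal. -/

import Mathlib

open ContinuousLinearMap

/-- An operator is hyponormal if `T*T - TT*` is positive. -/
def Hyponormal {H : Type*} [NormedAddCommGroup H] [InnerProductSpace ℂ H] [CompleteSpace H]
    (T : H →L[ℂ] H) : Prop :=
  (star T * T - T * star T).IsPositive

/-- If `T ∈ B(H)` is sub-n-normal, i.e. there is a Hilbert space `K ⊇ H` (given by an
isometric embedding `V : H → K`) and `S ∈ B(K)` with `Sⁿ` normal, `SH ⊆ H`, `S|_H = T`,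
then `Tⁿ` is hyponormal. -/
theorem subNNormal_pow_hyponormal
    {H K : Type*} [NormedAddCommGroup H] [InnerProductSpace ℂ H] [CompleteSpace H]
    [NormedAddCommGroup K] [InnerProductSpace ℂ K] [CompleteSpace K]
    (n : ℕ) (T : H →L[ℂ] H) (S : K →L[ℂ] K) (V : H →ₗᵢ[ℂ] K)
    (hnormal : IsStarNormal (S ^ n)) (hext : ∀ x : H, S (V x) = V (T x)) :
    Hyponormal (T ^ n) := by
  -- intertwining for powers
  have hVpow : ∀ (m : ℕ) (x : H), (S ^ m) (V x) = V ((T ^ m) x) := by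
    intro m
    induction m with
    | zero => intro x; simp
    | succ k ih =>
      intro x
      have h1 : (S ^ (k + 1)) (V x) = (S ^ k) (S (V x)) := by
        rw [pow_succ]; rfl
      have h2 : ((T ^ (k + 1)) x) = (T ^ k) (T x) := by
        rw [pow_succ]; rfl
      rw [h1, hext x, ih (T x), h2]
  set A : H →L[ℂ] H := T ^ n with hA
  set N : K →L[ℂ] K := S ^ n with hN
  have hVA : ∀ x : H, N (V x) = V (A x) := hVpow n
  -- norm equality for the normal operator N
  have hNnorm : ∀ y : K, ‖adjoint N y‖ = ‖N y‖ := by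
    intro y
    have hcomm : adjoint N * N = N * adjoint N := by
      have := hnormal.star_comm_self
      rwa [star_eq_adjoint] at this
    have h1 : (inner ℂ (N y) (N y) : ℂ) = inner ℂ ((adjoint N) (N y)) y :=
      (adjoint_inner_left N y (N y)).symm
    have h2 : (inner ℂ ((adjoint N) (N y)) y : ℂ) = inner ℂ (N ((adjoint N) y)) y := by
      have : (adjoint N * N) y = (N * adjoint N) y := by rw [hcomm]
      simpa [ContinuousLinearMap.mul_apply] using congrArg (fun z => (inner ℂ z y : ℂ)) this
    have h3 : (inner ℂ (N ((adjoint N) y)) y : ℂ) = inner ℂ ((adjoint N) y) ((adjoint N) y) :=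
      (adjoint_inner_right N ((adjoint N) y) y).symm
    have heq : (inner ℂ ((adjoint N) y) ((adjoint N) y) : ℂ) = inner ℂ (N y) (N y) := by
      rw [h1, h2, h3]
    rw [inner_self_eq_norm_sq_to_K, inner_self_eq_norm_sq_to_K] at heq
    have hr : ‖(adjoint N) y‖ ^ 2 = ‖N y‖ ^ 2 := by exact_mod_cast heq
    have := congrArg Real.sqrt hr
    rwa [Real.sqrt_sq (norm_nonneg _), Real.sqrt_sq (norm_nonneg _)] at this
  -- key inequality : ‖A* x‖ ≤ ‖A x‖
  have hkey : ∀ x : H, ‖adjoint A x‖ ≤ ‖A x‖ := by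
    intro x
    have hNA : ‖adjoint N (V x)‖ = ‖A x‖ := by
      rw [hNnorm, hVA, V.norm_map]
    rw [← hNA]
    set y := adjoint A x with hy
    have hinner : (inner ℂ y y : ℂ) = inner ℂ (adjoint N (V x)) (V y) := by
      calc (inner ℂ y y : ℂ) = inner ℂ x (A y) := adjoint_inner_left A y x
        _ = inner ℂ (V x) (V (A y)) := (V.inner_map_map x (A y)).symm
        _ = inner ℂ (V x) (N (V y)) := by rw [hVA]
        _ = inner ℂ (adjoint N (V x)) (V y) := (adjoint_inner_left N (V y) (V x)).symm
    have hsq : ‖y‖ ^ 2 ≤ ‖adjoint N (V x)‖ * ‖y‖ := by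
      have hcs := norm_inner_le_norm (𝕜 := ℂ) (adjoint N (V x)) (V y)
      rw [← hinner] at hcs
      rw [inner_self_eq_norm_sq_to_K] at hcs
      calc ‖y‖ ^ 2 = ‖((‖y‖ : ℂ)) ^ 2‖ := by
            rw [norm_pow, Complex.norm_real, Real.norm_of_nonneg (norm_nonneg _)]
        _ ≤ ‖adjoint N (V x)‖ * ‖V y‖ := hcs
        _ = ‖adjoint N (V x)‖ * ‖y‖ := by rw [V.norm_map]
    rcases eq_or_lt_of_le (norm_nonneg y) with h0 | h0
    · rw [← h0]; exact norm_nonneg _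
    · exact le_of_mul_le_mul_right (by rwa [sq] at hsq) h0
  -- conclude positivity
  constructor
  · exact (isSelfAdjoint_iff_isSymmetric (A := star A * A - A * star A)).mp
      (by simp [IsSelfAdjoint, star_sub, star_mul, star_star, mul_assoc])
  · intro x
    have hx : reApplyInnerSelf (star A * A - A * star A) x =
        ‖A x‖ ^ 2 - ‖adjoint A x‖ ^ 2 := by
      simp only [reApplyInnerSelf_apply, sub_apply, ContinuousLinearMap.mul_apply, inner_sub_left, map_sub,
        star_eq_adjoint]
      rw [adjoint_inner_left A x (A x), ← adjoint_inner_right A ((adjoint A) x) x]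
      rw [inner_self_eq_norm_sq_to_K, inner_self_eq_norm_sq_to_K]
      simp [← Complex.ofReal_pow]
    rw [hx]
    have := hkey x
    nlinarith [norm_nonneg (adjoint A x), norm_nonneg (A x)]
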